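/- Let $h$ be in the open fundamental chamber. Two vertices $w_1(h)$ and $w_2(h)$ of $\Xi_h = \operatorname{conv}(W\cdot h)$ are joined by an edge (a one-dimensional face) if and only if $w_2 = w_1 s_i$ for some $i \in I$. Consequently, the graph of vertices and edges of $\Xi_h$ is isomorphic to the Cayley graph of $(W,S)$. -/

import Mathlib

open scoped Pointwise

/-- The Coxeter matrix entry attached to a product `a_ij * a_ji` of entries of a
generalized Cartan matrix, via the standard table (`0` encodes `∞`). -/
def gcmCoxeterEntry (p : ℤ) : ℕ :=
  if p = 0 then 2 else if p = 1 then 3 else if p = 2 then 4 else if p = 3 then 6 else 0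

/-- The Weyl group of a symmetrizable generalized Cartan matrix, together with its action
on the real Cartan subalgebra of a free and cofree Kac–Moody root datum. -/
structure KMWeyl (n : ℕ) (V : Type*) [AddCommGroup V] [Module ℝ V]
    (W : Type*) [Group W] (M : CoxeterMatrix (Fin n)) where
  /-- the generalized Cartan matrix -/
  A : Matrix (Fin n) (Fin n) ℤ
  diag : ∀ i, A i i = 2
  offDiag : ∀ i j, i ≠ j → A i j ≤ 0
  zeroIff : ∀ i j, (A i j = 0 ↔ A j i = 0)
  symmetrizable : ∃ D B : Matrix (Fin n) (Fin n) ℝ, D.IsDiag ∧ B.IsSymm ∧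
    A.map (Int.cast : ℤ → ℝ) = D * B
  coxMat : ∀ i j, i ≠ j → M i j = gcmCoxeterEntry (A i j * A j i)
  /-- the Coxeter system structure on the Weyl group -/
  cs : CoxeterSystem M W
  /-- the linear action of the Weyl group on the Cartan subalgebra -/
  ρ : W →* (V →ₗ[ℝ] V)
  /-- the simple roots -/
  α : Fin n → (V →ₗ[ℝ] ℝ)
  /-- the simple coroots -/
  cor : Fin n → V
  pairing : ∀ i j, α j (cor i) = (A i j : ℝ)
  refl : ∀ i v, ρ (cs.simple i) v = v - α i v • cor i
  freeRoots : LinearIndependent ℝ α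
  cofree : LinearIndependent ℝ cor

namespace KMWeyl

variable {n : ℕ} {V : Type*} [AddCommGroup V] [Module ℝ V]
  {W : Type*} [Group W] {M : CoxeterMatrix (Fin n)}

/-- The orbit of a point `h` under the Weyl group. -/
def orb (K : KMWeyl n V W M) (h : V) : Set V := Set.range fun w => K.ρ w h

/-- The standard subgroup generated by the simple reflections indexed by `J`. -/
def std (K : KMWeyl n V W M) (J : Set (Fin n)) : Subgroup W :=
  Subgroup.closure (K.cs.simple '' J)

/-- The support of `w`: the indices occurring in every reduced word for `w`. -/
def supp (K : KMWeyl n V W M) (w : W) : Set (Fin n) :=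
  {i | ∀ l : List (Fin n), K.cs.wordProd l = w → l.length = K.cs.length w → i ∈ l}

end KMWeyl

/-- A face of a convex set: a nonempty convex extreme subset. -/
def IsFaceOf {V : Type*} [AddCommGroup V] [Module ℝ V] (P F : Set V) : Prop :=
  F.Nonempty ∧ Convex ℝ F ∧ IsExtreme ℝ P F

open CoxeterSystem List

namespace KMAux

section PQ


/-- Coefficient sequence for the action of alternating words on a coroot in rank 2. -/
def pqSeq (a b : ℝ) : ℕ → ℝ × ℝ
  | 0 => (1, 0)
  | k + 1 =>
      if Even k then ((pqSeq a b k).1, a * (pqSeq a b k).1 - (pqSeq a b k).2)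
      else (b * (pqSeq a b k).2 - (pqSeq a b k).1, (pqSeq a b k).2)

variable (a b : ℝ)

theorem pqSeq_zero : pqSeq a b 0 = (1, 0) := rfl
theorem pqSeq_one : pqSeq a b 1 = (1, a) := by norm_num [pqSeq, Nat.even_iff]
theorem pqSeq_two : pqSeq a b 2 = (b*a - 1, a) := by norm_num [pqSeq, Nat.even_iff]
theorem pqSeq_three : pqSeq a b 3 = (b*a - 1, a*(b*a-1) - a) := by
  norm_num [pqSeq, Nat.even_iff]
theorem pqSeq_four : pqSeq a b 4 = (b*(a*(b*a-1) - a) - (b*a - 1), a*(b*a-1) - a) := by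
  norm_num [pqSeq, Nat.even_iff]
theorem pqSeq_five : pqSeq a b 5 =
    (b*(a*(b*a-1) - a) - (b*a - 1), a*(b*(a*(b*a-1)-a) - (b*a-1)) - (a*(b*a-1) - a)) := by
  norm_num [pqSeq, Nat.even_iff]

theorem pqSeq_nonneg (ha : 0 ≤ a) (hb : 0 ≤ b) (P : ℤ) (hP : b * a = P)
    (hbig : 4 ≤ P → 1 ≤ a ∧ 1 ≤ b) (k : ℕ)
    (hk : gcmCoxeterEntry P = 0 ∨ k < gcmCoxeterEntry P) :
    0 ≤ (pqSeq a b k).1 ∧ 0 ≤ (pqSeq a b k).2 := by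
  have hP0 : (0:ℤ) ≤ P := by
    have : (0:ℝ) ≤ b * a := mul_nonneg hb ha
    rw [hP] at this
    exact_mod_cast this
  rcases lt_or_ge P 4 with h4 | h4
  · have hba : b * a = (P:ℝ) := hP
    interval_cases P <;> simp only [gcmCoxeterEntry] at hk <;> norm_num at hk hba
    · -- P = 0, m = 2
      interval_cases k
      · rw [pqSeq_zero]; norm_num
      · rw [pqSeq_one]; exact ⟨zero_le_one, ha⟩
    · -- P = 1, m = 3
      interval_cases k
      · rw [pqSeq_zero]; norm_num
      · rw [pqSeq_one]; exact ⟨zero_le_one, ha⟩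
      · rw [pqSeq_two]; dsimp only; constructor <;> linarith
    · -- P = 2, m = 4
      have e1 : a*(b*a-1) - a = 0 := by linear_combination a * hba
      interval_cases k
      · rw [pqSeq_zero]; norm_num
      · rw [pqSeq_one]; exact ⟨zero_le_one, ha⟩
      · rw [pqSeq_two]; dsimp only; constructor <;> linarith
      · rw [pqSeq_three]; dsimp only; constructor <;> linarith
    · -- P = 3, m = 6
      have e1 : b*(a*(b*a-1) - a) - (b*a - 1) = 1 := by linear_combination (b*a) * hba
      have e2 : a*(b*a-1) - a = a := by linear_combination a * hba
      have e3 : a*(b*(a*(b*a-1)-a) - (b*a-1)) - (a*(b*a-1) - a) = 0 := by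
        linear_combination (a*(b*a) - a) * hba
      interval_cases k
      · rw [pqSeq_zero]; norm_num
      · rw [pqSeq_one]; exact ⟨zero_le_one, ha⟩
      · rw [pqSeq_two]; dsimp only; constructor <;> linarith
      · rw [pqSeq_three]; dsimp only; constructor <;> linarith
      · rw [pqSeq_four]; dsimp only; constructor <;> linarith
      · rw [pqSeq_five]; dsimp only; constructor <;> linarith
  · -- infinite case : invariant induction
    have hab : (4:ℝ) ≤ a * b := by rw [mul_comm, hP]; exact_mod_cast h4
    obtain ⟨ha1, hb1⟩ := hbig h4
    clear hk
    suffices H : ∀ m, 0 ≤ (pqSeq a b m).1 ∧ 0 ≤ (pqSeq a b m).2 ∧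
        (Even m → 2 * (pqSeq a b m).2 ≤ a * (pqSeq a b m).1) ∧
        (¬ Even m → a * (pqSeq a b m).1 ≤ 2 * (pqSeq a b m).2) by
      exact ⟨(H k).1, (H k).2.1⟩
    intro m
    induction m with
    | zero =>
      refine ⟨by norm_num [pqSeq], by norm_num [pqSeq], ?_, ?_⟩
      · intro _; rw [pqSeq_zero]; norm_num; linarith
      · intro hc; exact absurd Even.zero hc
    | succ m ih =>
      obtain ⟨hp, hq, he, ho⟩ := ih
      by_cases hev : Even m
      · have h2 := he hev
        have hev1 : ¬ Even (m + 1) := by simp [Nat.even_add_one, hev]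
        simp only [pqSeq, if_pos hev]
        exact ⟨hp, by nlinarith, fun hc => absurd hc hev1, fun _ => by nlinarith⟩
      · have h2 := ho hev
        have hev1 : Even (m + 1) := by simpa [Nat.even_add_one] using hev
        simp only [pqSeq, if_neg hev]
        exact ⟨by nlinarith, hq, fun _ => by nlinarith, fun hc => absurd hev1 hc⟩


end PQ

section Cox

variable {n : ℕ} {W : Type*} [Group W] {M : CoxeterMatrix (Fin n)} (cs : CoxeterSystem M W)

local prefix:100 "s" => cs.simple
local prefix:100 "π" => cs.wordProd
local prefix:100 "ℓ" => cs.length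


/-- Parabolic rank-2 coset decomposition with alternating word. -/
theorem cosetDecomp (i j : Fin n) (hij : i ≠ j) :
    ∀ (N : ℕ) (w : W), ℓ w ≤ N →
      ∃ (u : W) (x y : Fin n) (k : ℕ),
        ((x = i ∧ y = j) ∨ (x = j ∧ y = i)) ∧
        w = u * π (alternatingWord x y k) ∧
        ℓ w = ℓ u + k ∧ ¬ cs.IsRightDescent u i ∧ ¬ cs.IsRightDescent u j := by
  intro N
  induction N with
  | zero =>
    intro w hw
    have hw1 : w = 1 := cs.length_eq_zero_iff.mp (Nat.le_zero.mp hw)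
    subst hw1
    refine ⟨1, i, j, 0, Or.inl ⟨rfl, rfl⟩, by simp [alternatingWord], by simp,
      cs.not_isRightDescent_one i, cs.not_isRightDescent_one j⟩
  | succ N ih =>
    intro w hw
    have key : ∀ y' : Fin n, (y' = i ∨ y' = j) → cs.IsRightDescent w y' →
        ∃ (u : W) (x y : Fin n) (k : ℕ),
          ((x = i ∧ y = j) ∨ (x = j ∧ y = i)) ∧
          w = u * π (alternatingWord x y k) ∧
          ℓ w = ℓ u + k ∧ ¬ cs.IsRightDescent u i ∧ ¬ cs.IsRightDescent u j := by
      intro y' hy' hd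
      set w' := w * s y' with hw'def
      have hlw : ℓ w' + 1 = ℓ w := cs.isRightDescent_iff.mp hd
      have hwN : ℓ w' ≤ N := by omega
      obtain ⟨u, x, y, k, hxy, hweq', hlen', hui, huj⟩ := ih w' hwN
      have hwrec : w = w' * s y' := by
        rw [hw'def, cs.simple_mul_simple_cancel_right]
      match k with
      | 0 =>
        have hw1 : w = u * s y' := by
          rw [hwrec, hweq']
          simp [alternatingWord]
        rcases hy' with rfl | rfl
        · refine ⟨u, j, y', 1, Or.inr ⟨rfl, rfl⟩, ?_, ?_, hui, huj⟩
          · rw [hw1]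
            congr 1
            rw [show (1:ℕ) = 0 + 1 from rfl, alternatingWord_succ]
            simp [alternatingWord]
          · omega
        · refine ⟨u, i, y', 1, Or.inl ⟨rfl, rfl⟩, ?_, ?_, hui, huj⟩
          · rw [hw1]
            congr 1
            rw [show (1:ℕ) = 0 + 1 from rfl, alternatingWord_succ]
            simp [alternatingWord]
          · omega
      | k' + 1 =>
        by_cases hyy : y' = y
        · -- contradiction: w gets shorter by two
          exfalso
          have hcat : alternatingWord x y (k' + 1) = (alternatingWord y x k').concat y :=
            alternatingWord_succ x y k'
          have hw2 : w = u * π (alternatingWord y x k') := by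
            rw [hwrec, hweq', hcat, cs.wordProd_concat, hyy, mul_assoc,
              cs.simple_mul_simple_cancel_right]
          have : ℓ w ≤ ℓ u + k' := by
            calc ℓ w ≤ ℓ u + ℓ (π (alternatingWord y x k')) := by
                  rw [hw2]; exact cs.length_mul_le _ _
              _ ≤ ℓ u + (alternatingWord y x k').length := by
                  exact Nat.add_le_add_left (cs.length_wordProd_le _) _
              _ = ℓ u + k' := by rw [length_alternatingWord]
          omega
        · -- y' = x, extend the word
          have hyx : y' = x := by
            rcases hxy with ⟨rfl, rfl⟩ | ⟨rfl, rfl⟩ <;> tauto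
          refine ⟨u, y, x, k' + 2, ?_, ?_, ?_, hui, huj⟩
          · rcases hxy with ⟨rfl, rfl⟩ | ⟨rfl, rfl⟩
            · exact Or.inr ⟨rfl, rfl⟩
            · exact Or.inl ⟨rfl, rfl⟩
          · have hcat : alternatingWord y x (k' + 2) = (alternatingWord x y (k' + 1)).concat x :=
              alternatingWord_succ y x (k' + 1)
            rw [hwrec, hweq', hcat, cs.wordProd_concat, hyx, mul_assoc]
          · omega
    by_cases hdi : cs.IsRightDescent w i
    · exact key i (Or.inl rfl) hdi
    by_cases hdj : cs.IsRightDescent w j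
    · exact key j (Or.inr rfl) hdj
    exact ⟨w, i, j, 0, Or.inl ⟨rfl, rfl⟩, by simp [alternatingWord], by simp, hdi, hdj⟩


end Cox

section Rep

variable {n : ℕ} {W : Type*} [Group W] {M : CoxeterMatrix (Fin n)} (cs : CoxeterSystem M W)
  {U : Type*} [AddCommGroup U] [Module ℝ U]
  (σ : W →* (U →ₗ[ℝ] U)) (c : Fin n → U) (a : Fin n → (U →ₗ[ℝ] ℝ))
  (A : Matrix (Fin n) (Fin n) ℤ)

theorem alt_apply
    (hpair : ∀ i j, a j (c i) = A i j)
    (hdiag : ∀ i, A i i = 2)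
    (hrefl : ∀ i v, σ (cs.simple i) v = v - a i v • c i)
    (i j : Fin n) (k : ℕ) :
    σ (cs.wordProd (alternatingWord i j k)) (c i)
      = (pqSeq (-(A i j : ℝ)) (-(A j i : ℝ)) k).1 • c i
        + (pqSeq (-(A i j : ℝ)) (-(A j i : ℝ)) k).2 • c j := by
  induction k with
  | zero => simp [alternatingWord, pqSeq]
  | succ k ih =>
    rw [alternatingWord_succ', cs.wordProd_cons, map_mul]
    have happ : (σ (cs.simple (if Even k then j else i)) *
        σ (cs.wordProd (alternatingWord i j k))) (c i)
        = σ (cs.simple (if Even k then j else i))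
            (σ (cs.wordProd (alternatingWord i j k)) (c i)) := rfl
    rw [happ, ih]
    have h2i : ((A i i : ℤ) : ℝ) = 2 := by rw [hdiag]; norm_num
    have h2j : ((A j j : ℤ) : ℝ) = 2 := by rw [hdiag]; norm_num
    by_cases hev : Even k
    · rw [if_pos hev, hrefl j, map_add, LinearMap.map_smul, LinearMap.map_smul,
        hpair i j, hpair j j, h2j]
      simp only [pqSeq, if_pos hev, smul_eq_mul]
      module
    · rw [if_neg hev, hrefl i, map_add, LinearMap.map_smul, LinearMap.map_smul,
        hpair i i, hpair j i, h2i]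
      simp only [pqSeq, if_neg hev, smul_eq_mul]
      module

theorem rank2
    (hpair : ∀ i j, a j (c i) = A i j)
    (hdiag : ∀ i, A i i = 2)
    (hoff : ∀ i j, i ≠ j → A i j ≤ 0)
    (hcox : ∀ i j, i ≠ j → M i j = gcmCoxeterEntry (A i j * A j i))
    (hrefl : ∀ i v, σ (cs.simple i) v = v - a i v • c i)
    (i j : Fin n) (hij : i ≠ j) (k : ℕ)
    (hred : cs.length (cs.wordProd (alternatingWord i j k) * cs.simple i) = k + 1) :
    ∃ p q : ℝ, 0 ≤ p ∧ 0 ≤ q ∧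
      σ (cs.wordProd (alternatingWord i j k)) (c i) = p • c i + q • c j := by
  have hcat : cs.wordProd (alternatingWord j i (k+1))
      = cs.wordProd (alternatingWord i j k) * cs.simple i := by
    rw [alternatingWord_succ, cs.wordProd_concat]
  have hkM : M i j = 0 ∨ k < M i j := by
    by_contra hcon
    push_neg at hcon
    obtain ⟨hM0, hMk⟩ := hcon
    have hMji : M j i ≠ 0 := by rw [M.symmetric j i]; exact hM0
    have hnred : ¬ cs.IsReduced (alternatingWord j i (k+1)) :=
      cs.not_isReduced_alternatingWord j i hMji (by rw [M.symmetric j i]; omega)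
    apply hnred
    unfold CoxeterSystem.IsReduced
    rw [hcat, length_alternatingWord, hred]
  have ha : (0:ℝ) ≤ -(A i j : ℝ) := by
    have := hoff i j hij
    simp only [neg_nonneg]
    exact_mod_cast this
  have hb : (0:ℝ) ≤ -(A j i : ℝ) := by
    have := hoff j i (Ne.symm hij)
    simp only [neg_nonneg]
    exact_mod_cast this
  have hP : (-(A j i : ℝ)) * (-(A i j : ℝ)) = ((A i j * A j i : ℤ) : ℝ) := by
    push_cast; ring
  have hbig : 4 ≤ A i j * A j i → 1 ≤ -(A i j : ℝ) ∧ 1 ≤ -(A j i : ℝ) := by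
    intro h4
    have h1 : A i j ≠ 0 := by intro h0; rw [h0] at h4; omega
    have h2 : A j i ≠ 0 := by intro h0; rw [h0] at h4; simp at h4
    have e1 : (1:ℤ) ≤ -(A i j) := by have := hoff i j hij; omega
    have e2 : (1:ℤ) ≤ -(A j i) := by have := hoff j i (Ne.symm hij); omega
    constructor <;> [exact_mod_cast e1; exact_mod_cast e2]
  obtain ⟨hp, hq⟩ := pqSeq_nonneg (-(A i j : ℝ)) (-(A j i : ℝ)) ha hb (A i j * A j i) hP hbig k
    (by rw [← hcox i j hij]; exact hkM)
  exact ⟨_, _, hp, hq, alt_apply cs σ c a A hpair hdiag hrefl i j k⟩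

/-- Coroot positivity (Tits' theorem, one direction). -/
theorem gposAux
    (hpair : ∀ i j, a j (c i) = A i j)
    (hdiag : ∀ i, A i i = 2)
    (hoff : ∀ i j, i ≠ j → A i j ≤ 0)
    (hcox : ∀ i j, i ≠ j → M i j = gcmCoxeterEntry (A i j * A j i))
    (hrefl : ∀ i v, σ (cs.simple i) v = v - a i v • c i) :
    ∀ (N : ℕ) (w : W) (i : Fin n), cs.length w ≤ N → ¬ cs.IsRightDescent w i →
      ∃ d : Fin n → ℝ, (∀ t, 0 ≤ d t) ∧ σ w (c i) = ∑ t, d t • c t := by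
  intro N
  induction N with
  | zero =>
    intro w i hw _
    have hw1 : w = 1 := cs.length_eq_zero_iff.mp (Nat.le_zero.mp hw)
    subst hw1
    refine ⟨fun t => if t = i then 1 else 0, fun t => by positivity, ?_⟩
    simp [ite_smul]
  | succ N ihN =>
    intro w i hw hwi
    rcases eq_or_ne w 1 with rfl | hw1
    · refine ⟨fun t => if t = i then 1 else 0, fun t => by positivity, ?_⟩
      simp [ite_smul]
    obtain ⟨j, hdj⟩ := cs.exists_rightDescent_of_ne_one hw1
    have hij : i ≠ j := fun h => hwi (h ▸ hdj)
    obtain ⟨u, x, y, k, hxy, hweq, hlen, hui, huj⟩ :=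
      cosetDecomp cs i j hij (cs.length w) w le_rfl
    set v := cs.wordProd (alternatingWord x y k) with hv
    have hk1 : 1 ≤ k := by
      rcases Nat.eq_zero_or_pos k with h0 | h
      · exfalso
        apply huj
        have hwu : w = u := by rw [hweq, hv, h0]; simp [alternatingWord]
        exact hwu ▸ hdj
      · exact h
    have hvlen : cs.length v = k := by
      have h1 : cs.length v ≤ k := by
        have := cs.length_wordProd_le (alternatingWord x y k)
        rwa [length_alternatingWord] at this
      have h2 : cs.length w ≤ cs.length u + cs.length v := by
        rw [hweq]; exact cs.length_mul_le u v
      omega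
    have hwsi : cs.length (w * cs.simple i) = cs.length w + 1 :=
      cs.not_isRightDescent_iff.mp hwi
    have hvsi : cs.length (v * cs.simple i) = k + 1 := by
      have hle : cs.length (v * cs.simple i) ≤ k + 1 := by
        have := cs.length_mul_le v (cs.simple i)
        rwa [hvlen, cs.length_simple] at this
      have hassoc : w * cs.simple i = u * (v * cs.simple i) := by rw [hweq, mul_assoc]
      have hge : cs.length (w * cs.simple i) ≤ cs.length u + cs.length (v * cs.simple i) := by
        rw [hassoc]; exact cs.length_mul_le _ _
      omega
    obtain ⟨hy, hx⟩ : y = j ∧ x = i := by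
      rcases hxy with ⟨hx, hy⟩ | ⟨hx, hy⟩
      · exact ⟨hy, hx⟩
      · exfalso
        obtain ⟨k', rfl⟩ : ∃ k', k = k' + 1 :=
          ⟨k - 1, by omega⟩
        have hcan : v * cs.simple i = cs.wordProd (alternatingWord y x k') := by
          rw [hv, alternatingWord_succ x y k', cs.wordProd_concat, hy,
            cs.simple_mul_simple_cancel_right]
        have : cs.length (v * cs.simple i) ≤ k' + 1 := by
          rw [hcan]
          have := cs.length_wordProd_le (alternatingWord y x k')
          rw [length_alternatingWord] at this
          omega
        omega
    rw [hv, hx, hy] at hvsi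
    obtain ⟨p, q, hp, hq, hval⟩ :=
      rank2 cs σ c a A hpair hdiag hoff hcox hrefl i j hij k hvsi
    have hval' : σ v (c i) = p • c i + q • c j := by rw [hv, hx, hy]; exact hval
    have hulen : cs.length u ≤ N := by omega
    obtain ⟨d, hd, hdval⟩ := ihN u i hulen hui
    obtain ⟨e, he, heval⟩ := ihN u j hulen huj
    refine ⟨fun t => p * d t + q * e t,
      fun t => add_nonneg (mul_nonneg hp (hd t)) (mul_nonneg hq (he t)), ?_⟩
    have hw2 : σ w (c i) = σ u (σ v (c i)) := by rw [hweq, map_mul]; rfl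
    rw [hw2, hval', map_add, LinearMap.map_smul, LinearMap.map_smul, hdval, heval,
      Finset.smul_sum, Finset.smul_sum, ← Finset.sum_add_distrib]
    exact Finset.sum_congr rfl fun t _ => by rw [smul_smul, smul_smul, ← add_smul]


end Rep

section KM

open KMWeyl

variable {n : ℕ} {V : Type*} [AddCommGroup V] [Module ℝ V]
  {W : Type*} [Group W] {M : CoxeterMatrix (Fin n)}

variable (K : KMWeyl n V W M)

/-- Coordinate functionals dual to the coroots. -/
theorem exists_coords :
    ∃ f : Fin n → (V →ₗ[ℝ] ℝ), ∀ t k, f t (K.cor k) = if t = k then 1 else 0 := by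
  classical
  let T : (Fin n → ℝ) →ₗ[ℝ] V :=
    { toFun := fun g => ∑ t, g t • K.cor t
      map_add' := by intro g₁ g₂; simp [add_smul, Finset.sum_add_distrib]
      map_smul' := by intro r g; simp [smul_smul, Finset.smul_sum] }
  have hker : LinearMap.ker T = ⊥ := by
    rw [LinearMap.ker_eq_bot']
    intro g hg
    have := Fintype.linearIndependent_iff.mp K.cofree g hg
    funext t
    exact this t
  obtain ⟨G, hG⟩ := T.exists_leftInverse_of_injective hker
  refine ⟨fun t => (LinearMap.proj t).comp G, fun t k => ?_⟩
  have hTk : T (Pi.single k 1) = K.cor k := by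
    simp only [T, LinearMap.coe_mk, AddHom.coe_mk]
    rw [Finset.sum_eq_single k]
    · simp
    · intro b _ hb; simp [Pi.single_apply, hb]
    · intro hk; exact absurd (Finset.mem_univ k) hk
  have := LinearMap.congr_fun hG (Pi.single k 1)
  simp only [LinearMap.comp_apply, LinearMap.id_apply] at this
  rw [hTk] at this
  simp [this, Pi.single_apply]

/-- Positivity of coroots. -/
theorem corPos {w : W} {i : Fin n} (hw : ¬ K.cs.IsRightDescent w i) :
    ∃ d : Fin n → ℝ, (∀ t, 0 ≤ d t) ∧ K.ρ w (K.cor i) = ∑ t, d t • K.cor t :=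
  gposAux K.cs K.ρ K.cor K.α K.A K.pairing K.diag K.offDiag K.coxMat K.refl
    (K.cs.length w) w i le_rfl hw

/-- The contragredient action on the dual space. -/
def dualRho : W →* (Module.Dual ℝ V →ₗ[ℝ] Module.Dual ℝ V) where
  toFun w := (K.ρ w⁻¹).dualMap
  map_one' := by ext φ v; simp
  map_mul' x y := by
    ext φ v
    simp [mul_inv_rev, map_mul, LinearMap.dualMap_apply, Module.End.mul_apply]

theorem dualRho_refl (i : Fin n) (φ : Module.Dual ℝ V) :
    dualRho K (K.cs.simple i) φ = φ - (Module.Dual.eval ℝ V (K.cor i)) φ • K.α i := by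
  ext v
  simp only [dualRho, MonoidHom.coe_mk, OneHom.coe_mk, LinearMap.dualMap_apply,
    K.cs.inv_simple, LinearMap.sub_apply, LinearMap.smul_apply, Module.Dual.eval_apply,
    smul_eq_mul]
  rw [K.refl i v]
  simp [mul_comm]

/-- Positivity of roots evaluated on chamber points. -/
theorem alphaPos (h : V) (hC : ∀ i, 0 < K.α i h) {w : W} {i : Fin n}
    (hw : ¬ K.cs.IsLeftDescent w i) : 0 < K.α i (K.ρ w h) := by
  have hw' : ¬ K.cs.IsRightDescent w⁻¹ i := by
    rw [K.cs.isRightDescent_inv_iff]; exact hw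
  have hpair' : ∀ i j : Fin n, (Module.Dual.eval ℝ V (K.cor j)) (K.α i) = ((K.A j i : ℤ) : ℝ) := by
    intro i j
    simp [K.pairing]
  have hdiag' : ∀ i : Fin n, K.A i i = 2 := fun i => K.diag i
  have hoff' : ∀ i j : Fin n, i ≠ j → K.A j i ≤ 0 := fun i j hij => K.offDiag j i (Ne.symm hij)
  have hcox' : ∀ i j : Fin n, i ≠ j → M i j = gcmCoxeterEntry (K.A j i * K.A i j) := by
    intro i j hij
    rw [mul_comm]
    exact K.coxMat i j hij
  have hgp := gposAux K.cs (dualRho K) K.α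
    (fun i => Module.Dual.eval ℝ V (K.cor i))
    (Matrix.of fun i j => K.A j i)
    hpair' hdiag' hoff' hcox' (dualRho_refl K)
  obtain ⟨d, hd, hval⟩ := hgp (K.cs.length w⁻¹) w⁻¹ i le_rfl hw'
  have heval : K.α i (K.ρ w h) = ∑ t, d t * K.α t h := by
    have := LinearMap.congr_fun hval h
    simp only [LinearMap.sum_apply, LinearMap.smul_apply, smul_eq_mul] at this
    rw [← this]
    simp [dualRho, LinearMap.dualMap_apply]
  rw [heval]
  have hnn : ∀ t ∈ Finset.univ, 0 ≤ d t * K.α t h :=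
    fun t _ => mul_nonneg (hd t) (hC t).le
  rcases eq_or_lt_of_le (Finset.sum_nonneg hnn) with hzero | hpos
  · exfalso
    have hall := (Finset.sum_eq_zero_iff_of_nonneg hnn).mp hzero.symm
    have hd0 : ∀ t, d t = 0 := by
      intro t
      have := hall t (Finset.mem_univ t)
      rcases mul_eq_zero.mp this with h0 | h0
      · exact h0
      · exact absurd h0 (hC t).ne'
    have hval0 : (dualRho K w⁻¹) (K.α i) = 0 := by
      rw [hval]
      simp [hd0]
    have h2 := LinearMap.congr_fun hval0 (K.ρ w⁻¹ (K.cor i))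
    simp only [dualRho, MonoidHom.coe_mk, OneHom.coe_mk, LinearMap.dualMap_apply,
      inv_inv, LinearMap.zero_apply] at h2
    rw [← Module.End.mul_apply, ← map_mul, mul_inv_cancel, map_one,
      Module.End.one_apply, K.pairing i i, K.diag i] at h2
    norm_num at h2
  · exact hpos

theorem alphaNeg (h : V) (hC : ∀ i, 0 < K.α i h) {w : W} {i : Fin n}
    (hw : K.cs.IsLeftDescent w i) : K.α i (K.ρ w h) < 0 := by
  set v := K.cs.simple i * w with hv
  have hsv : K.cs.simple i * v = w := by
    rw [hv, K.cs.simple_mul_simple_cancel_left]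
  have hnd : ¬ K.cs.IsLeftDescent v i := by
    intro hd
    unfold CoxeterSystem.IsLeftDescent at hd hw
    rw [hsv] at hd
    rw [← hv] at hw
    omega
  have hpos := alphaPos K h hC hnd
  have hcomp : K.ρ w h = K.ρ (K.cs.simple i) (K.ρ v h) := by
    rw [← Module.End.mul_apply, ← map_mul, hsv]
  rw [hcomp, K.refl i, map_sub, LinearMap.map_smul, K.pairing i i, K.diag i]
  push_cast
  simp only [smul_eq_mul]
  nlinarith

theorem dstep (h : V) (w : W) (t : Fin n) :
    h - K.ρ (w * K.cs.simple t) h = (h - K.ρ w h) + K.α t h • K.ρ w (K.cor t) := by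
  have : K.ρ (w * K.cs.simple t) h = K.ρ w (K.ρ (K.cs.simple t) h) := by
    rw [map_mul]; rfl
  rw [this, K.refl t, map_sub, LinearMap.map_smul]
  abel

theorem dpos (h : V) (hC : ∀ i, 0 < K.α i h) (w : W) :
    ∃ d : Fin n → ℝ, (∀ t, 0 ≤ d t) ∧ h - K.ρ w h = ∑ t, d t • K.cor t := by
  suffices H : ∀ (N : ℕ) (w : W), K.cs.length w ≤ N →
      ∃ d : Fin n → ℝ, (∀ t, 0 ≤ d t) ∧ h - K.ρ w h = ∑ t, d t • K.cor t from
    H (K.cs.length w) w le_rfl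
  intro N
  induction N with
  | zero =>
    intro w hw
    have hw1 : w = 1 := K.cs.length_eq_zero_iff.mp (Nat.le_zero.mp hw)
    subst hw1
    exact ⟨fun _ => 0, fun _ => le_rfl, by simp⟩
  | succ N ih =>
    intro w hw
    rcases eq_or_ne w 1 with rfl | hw1
    · exact ⟨fun _ => 0, fun _ => le_rfl, by simp⟩
    obtain ⟨t, hdt⟩ := K.cs.exists_rightDescent_of_ne_one hw1
    set w' := w * K.cs.simple t with hw'
    have hrec : w = w' * K.cs.simple t := by
      rw [hw', K.cs.simple_mul_simple_cancel_right]
    have hlen : K.cs.length w' + 1 = K.cs.length w := K.cs.isRightDescent_iff.mp hdt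
    have hnd : ¬ K.cs.IsRightDescent w' t := by
      unfold CoxeterSystem.IsRightDescent
      rw [← hrec]
      omega
    obtain ⟨d, hd, hdval⟩ := ih w' (by omega)
    obtain ⟨e, he, heval⟩ := corPos K hnd
    refine ⟨fun s => d s + K.α t h * e s,
      fun s => add_nonneg (hd s) (mul_nonneg (hC t).le (he s)), ?_⟩
    rw [hrec, dstep K h w' t, hdval, heval, Finset.smul_sum, ← Finset.sum_add_distrib]
    exact Finset.sum_congr rfl fun s _ => by rw [smul_smul, ← add_smul]

variable {f : Fin n → (V →ₗ[ℝ] ℝ)}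

theorem feval (hf : ∀ t k, f t (K.cor k) = if t = k then 1 else 0) (d : Fin n → ℝ) (t : Fin n) :
    f t (∑ s, d s • K.cor s) = d t := by
  rw [map_sum]
  rw [Finset.sum_eq_single t]
  · rw [LinearMap.map_smul, hf t t, if_pos rfl, smul_eq_mul, mul_one]
  · intro b _ hb
    rw [LinearMap.map_smul, hf t b, if_neg (Ne.symm hb), smul_eq_mul, mul_zero]
  · intro ht; exact absurd (Finset.mem_univ t) ht

/-- If `k` appears in no reduced word for `w`, then the `k` coefficient of `w(corₖ)` is ≥ 1. -/
theorem notmem_ge_one (hf : ∀ t k, f t (K.cor k) = if t = k then 1 else 0) :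
    ∀ (N : ℕ) (w : W) (k : Fin n), K.cs.length w ≤ N →
      (∀ l : List (Fin n), K.cs.IsReduced l → K.cs.wordProd l = w → k ∉ l) →
      1 ≤ f k (K.ρ w (K.cor k)) := by
  intro N
  induction N with
  | zero =>
    intro w k hw _
    have hw1 : w = 1 := K.cs.length_eq_zero_iff.mp (Nat.le_zero.mp hw)
    subst hw1
    simp [hf k k]
  | succ N ih =>
    intro w k hw hnot
    rcases eq_or_ne w 1 with rfl | hw1
    · simp [hf k k]
    obtain ⟨t, hdt⟩ := K.cs.exists_rightDescent_of_ne_one hw1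
    set w' := w * K.cs.simple t with hw'def
    have hrec : w = w' * K.cs.simple t := by
      rw [hw'def, K.cs.simple_mul_simple_cancel_right]
    have hlen : K.cs.length w' + 1 = K.cs.length w := K.cs.isRightDescent_iff.mp hdt
    have hnd : ¬ K.cs.IsRightDescent w' t := by
      unfold CoxeterSystem.IsRightDescent
      rw [← hrec]
      omega
    -- extension of reduced words
    have hext : ∀ l : List (Fin n), K.cs.IsReduced l → K.cs.wordProd l = w' →
        K.cs.IsReduced (l ++ [t]) ∧ K.cs.wordProd (l ++ [t]) = w := by
      intro l hl hlw
      have hp : K.cs.wordProd (l ++ [t]) = w := by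
        rw [K.cs.wordProd_append, K.cs.wordProd_singleton, hlw, ← hrec]
      refine ⟨?_, hp⟩
      unfold CoxeterSystem.IsReduced at hl ⊢
      rw [hp, List.length_append, List.length_singleton, ← hl, hlw]
      omega
    have htk : t ≠ k := by
      intro hteq
      obtain ⟨l, hl, hlw⟩ := K.cs.exists_reduced_word' w'
      obtain ⟨hred, hprod⟩ := hext l hl hlw.symm
      exact hnot (l ++ [t]) hred hprod (by simp [hteq])
    have hnot' : ∀ l : List (Fin n), K.cs.IsReduced l → K.cs.wordProd l = w' → k ∉ l := by
      intro l hl hlw hkl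
      obtain ⟨hred, hprod⟩ := hext l hl hlw
      exact hnot (l ++ [t]) hred hprod (by simp [hkl])
    have ihw' := ih w' k (by omega) hnot'
    obtain ⟨e, he, heval⟩ := corPos K hnd
    have hcomp : K.ρ w (K.cor k) = K.ρ w' (K.cor k) - (K.A k t : ℝ) • K.ρ w' (K.cor t) := by
      have h1 : K.ρ w (K.cor k) = K.ρ w' (K.ρ (K.cs.simple t) (K.cor k)) := by
        rw [hrec, map_mul]; rfl
      rw [h1, K.refl t, K.pairing k t, map_sub, LinearMap.map_smul]
    rw [hcomp, map_sub, LinearMap.map_smul]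
    have hA : (0:ℝ) ≤ -(K.A k t : ℝ) := by
      have := K.offDiag k t (Ne.symm htk)
      simp only [neg_nonneg]
      exact_mod_cast this
    have hnn : 0 ≤ f k (K.ρ w' (K.cor t)) := by
      rw [heval, feval K hf]
      exact he k
    have hsm : (K.A k t : ℝ) • f k (K.ρ w' (K.cor t)) = (K.A k t : ℝ) * f k (K.ρ w' (K.cor t)) :=
      rfl
    nlinarith

/-- Letters of reduced words give strictly positive coefficients. -/
theorem supp_pos (h : V) (hC : ∀ i, 0 < K.α i h)
    (hf : ∀ t k, f t (K.cor k) = if t = k then 1 else 0) :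
    ∀ (N : ℕ) (l : List (Fin n)), l.length ≤ N → K.cs.IsReduced l → ∀ k ∈ l,
      0 < f k (h - K.ρ (K.cs.wordProd l) h) := by
  intro N
  induction N with
  | zero =>
    intro l hl _ k hk
    interval_cases hlen : l.length
    · rw [List.length_eq_zero_iff] at hlen
      subst hlen
      simp at hk
  | succ N ih =>
    intro l hlN hred k hk
    rcases List.eq_nil_or_concat l with rfl | ⟨l', t, rfl⟩
    · simp at hk
    simp only [List.concat_eq_append] at hlN hred hk ⊢
    have hl'red : K.cs.IsReduced l' := by
      have := CoxeterSystem.IsReduced.take hred l'.length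
      rwa [List.take_left] at this
    have hprod : K.cs.wordProd (l' ++ [t]) = K.cs.wordProd l' * K.cs.simple t := by
      rw [K.cs.wordProd_append, K.cs.wordProd_singleton]
    set w' := K.cs.wordProd l' with hw'
    have hlenl : K.cs.length (K.cs.wordProd (l' ++ [t])) = l'.length + 1 := by
      have := hred
      unfold CoxeterSystem.IsReduced at this
      rw [this]
      simp
    have hnd : ¬ K.cs.IsRightDescent w' t := by
      unfold CoxeterSystem.IsRightDescent
      rw [← hprod, hlenl, hw', hl'red]
      omega
    have hD : h - K.ρ (K.cs.wordProd (l' ++ [t])) h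
        = (h - K.ρ w' h) + K.α t h • K.ρ w' (K.cor t) := by
      rw [hprod, dstep]
    rw [hD, map_add, LinearMap.map_smul, smul_eq_mul]
    obtain ⟨e, he, heval⟩ := corPos K hnd
    have hnn2 : 0 ≤ f k (K.ρ w' (K.cor t)) := by
      rw [heval, feval K hf]
      exact he k
    obtain ⟨d0, hd0, hd0val⟩ := dpos K h hC w'
    have hnn1 : 0 ≤ f k (h - K.ρ w' h) := by
      rw [hd0val, feval K hf]
      exact hd0 k
    rcases List.mem_append.mp hk with hk' | hk'
    · have hl'N : l'.length ≤ N := by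
        simp only [List.length_append, List.length_singleton] at hlN
        omega
      have hpos := ih l' hl'N hl'red k hk'
      rw [← hw'] at hpos
      nlinarith [(hC t).le]
    · have hkt : k = t := by simpa using hk'
      subst hkt
      by_cases hex : ∃ l'' : List (Fin n), K.cs.IsReduced l'' ∧ K.cs.wordProd l'' = w' ∧ k ∈ l''
      · obtain ⟨l'', hl''red, hl''w, hkl''⟩ := hex
        have hlen'' : l''.length = l'.length := by
          have e1 := hl''red
          have e2 := hl'red
          unfold CoxeterSystem.IsReduced at e1 e2
          rw [← e1, ← e2, hl''w]
        have hl''N : l''.length ≤ N := by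
          simp only [List.length_append, List.length_singleton] at hlN
          omega
        have hpos := ih l'' hl''N hl''red k hkl''
        rw [hl''w] at hpos
        nlinarith [(hC k).le]
      · push_neg at hex
        have hge := notmem_ge_one K hf (K.cs.length w') w' k le_rfl
          (fun l'' h1 h2 => hex l'' h1 h2)
        have := hC k
        nlinarith

/-- Characterization of orbit points on the `i`-th edge ray. -/
theorem charEdge (h : V) (hC : ∀ i, 0 < K.α i h)
    (hf : ∀ t k, f t (K.cor k) = if t = k then 1 else 0)
    {v : W} {i : Fin n} (hv : ∀ t, t ≠ i → f t (h - K.ρ v h) = 0) :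
    v = 1 ∨ v = K.cs.simple i := by
  obtain ⟨l, hred, hvl⟩ := K.cs.exists_reduced_word' v
  have hall : ∀ k ∈ l, k = i := by
    intro k hk
    by_contra hki
    have hpos := supp_pos K h hC hf l.length l le_rfl hred k hk
    rw [← hvl] at hpos
    rw [hv k hki] at hpos
    exact lt_irrefl 0 hpos
  match l, hvl, hred, hall with
  | [], hvl, _, _ => exact Or.inl (by rw [hvl, K.cs.wordProd_nil])
  | [k], hvl, _, hall =>
    exact Or.inr (by rw [hvl, K.cs.wordProd_singleton, hall k (by simp)])
  | k1 :: k2 :: r, hvl, hred, hall =>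
    exfalso
    have h1 : k1 = i := hall k1 (by simp)
    have h2 : k2 = i := hall k2 (by simp)
    have hpp : K.cs.wordProd (k1 :: k2 :: r) = K.cs.wordProd r := by
      rw [K.cs.wordProd_cons, K.cs.wordProd_cons, h1, h2,
        K.cs.simple_mul_simple_cancel_left]
    have hle := K.cs.length_wordProd_le r
    unfold CoxeterSystem.IsReduced at hred
    rw [hpp] at hred
    simp only [List.length_cons] at hred
    omega

/-- The orbit map is injective. -/
theorem orbInj (h : V) (hC : ∀ i, 0 < K.α i h)
    {w₁ w₂ : W} (he : K.ρ w₁ h = K.ρ w₂ h) : w₁ = w₂ := by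
  classical
  obtain ⟨f, hf⟩ := exists_coords K
  have key : ∀ v : W, K.ρ v h = h → v = 1 := by
    intro v hv
    by_contra hv1
    obtain ⟨l, hred, hvl⟩ := K.cs.exists_reduced_word' v
    have hlne : l ≠ [] := by
      intro h0
      subst h0
      rw [K.cs.wordProd_nil] at hvl
      exact hv1 hvl
    obtain ⟨k, hk⟩ := List.exists_mem_of_ne_nil l hlne
    have hpos := supp_pos K h hC hf l.length l le_rfl hred k hk
    rw [← hvl, hv] at hpos
    simp at hpos
  have : K.ρ (w₂⁻¹ * w₁) h = h := by
    rw [map_mul, Module.End.mul_apply, he, ← Module.End.mul_apply, ← map_mul,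
      inv_mul_cancel, map_one, Module.End.one_apply]
  have := key _ this
  rw [inv_mul_eq_one] at this
  exact this.symm


end KM

end KMAux

/-- Two distinct vertices `w₁(h)` and `w₂(h)` of `Ξ_h` are joined by an edge precisely when
`w₂ = w₁ s_i` for some `i`; hence the graph of `Ξ_h` is the Cayley graph of `(W,S)`. -/
theorem stmt_10 {n : ℕ} {V : Type*} [AddCommGroup V] [Module ℝ V]
    {W : Type*} [Group W] {M : CoxeterMatrix (Fin n)} (K : KMWeyl n V W M)
    (h : V) (hC : ∀ i, 0 < K.α i h)
    (w₁ w₂ : W) (hne : w₁ ≠ w₂) :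
    IsFaceOf (convexHull ℝ (K.orb h)) (segment ℝ (K.ρ w₁ h) (K.ρ w₂ h)) ↔
      ∃ i : Fin n, w₂ = w₁ * K.cs.simple i := by
  classical
  obtain ⟨f, hf⟩ := KMAux.exists_coords K
  constructor
  · rintro ⟨-, -, -, hext⟩
    set w := w₁⁻¹ * w₂ with hwdef
    have hwne : w ≠ 1 := by
      rw [hwdef, Ne, inv_mul_eq_one]
      exact hne
    obtain ⟨l, hred, hvl⟩ := K.cs.exists_reduced_word' w
    match l, hred, hvl with
    | [], _, hvl => exact absurd (by rw [hvl, K.cs.wordProd_nil]) hwne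
    | [i], _, hvl =>
      refine ⟨i, ?_⟩
      have hw : w₁⁻¹ * w₂ = K.cs.simple i := by
        rw [← hwdef, hvl, K.cs.wordProd_singleton]
      exact inv_mul_eq_iff_eq_mul.mp hw
    | i :: j :: r, hred, hvl =>
      exfalso
      have hij : i ≠ j := by
        rintro rfl
        have hpp : K.cs.wordProd (i :: i :: r) = K.cs.wordProd r := by
          rw [K.cs.wordProd_cons, K.cs.wordProd_cons, K.cs.simple_mul_simple_cancel_left]
        have hle := K.cs.length_wordProd_le r
        unfold CoxeterSystem.IsReduced at hred
        rw [hpp] at hred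
        simp only [List.length_cons] at hred
        omega
      have hlw : K.cs.length w = r.length + 2 := by
        unfold CoxeterSystem.IsReduced at hred
        rw [hvl, hred]
        simp
      have hld : K.cs.IsLeftDescent w i := by
        unfold CoxeterSystem.IsLeftDescent
        have h1 : K.cs.simple i * w = K.cs.wordProd (j :: r) := by
          rw [hvl, K.cs.wordProd_cons, K.cs.simple_mul_simple_cancel_left]
        have h2 := K.cs.length_wordProd_le (j :: r)
        simp only [List.length_cons] at h2
        rw [h1]
        omega
      have hbeta := KMAux.alphaNeg K h hC hld
      set β := K.α i (K.ρ w h) with hβ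
      set Ai := K.α i h with hAi
      have hAipos : 0 < Ai := hC i
      have hden : 0 < Ai - β := by linarith
      set lam := -β / (Ai - β) with hlam
      have hlam0 : 0 < lam := div_pos (by linarith) hden
      have hlam1 : lam < 1 := by
        rw [hlam, div_lt_one hden]; linarith
      have hcoef : lam * Ai + (1 - lam) * β = 0 := by
        rw [hlam]; field_simp; ring
      set y₁ := K.ρ (w₁ * K.cs.simple i) h with hy₁
      set y₂ := K.ρ (w₁ * (K.cs.simple i * w)) h with hy₂
      set x₁ := K.ρ w₁ h with hx₁
      set x₂ := K.ρ w₂ h with hx₂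
      have hrw2 : K.ρ w₁ (K.ρ w h) = x₂ := by
        rw [hx₂, ← Module.End.mul_apply, ← map_mul, hwdef, mul_inv_cancel_left]
      have hidsmall : lam • (K.ρ (K.cs.simple i) h) + (1 - lam) • (K.ρ (K.cs.simple i * w) h)
          = lam • h + (1 - lam) • (K.ρ w h) := by
        have e1 : K.ρ (K.cs.simple i) h = h - Ai • K.cor i := by rw [K.refl i h, hAi]
        have e2 : K.ρ (K.cs.simple i * w) h = K.ρ w h - β • K.cor i := by
          rw [map_mul, Module.End.mul_apply, K.refl i, hβ]
        have hz : (lam * Ai) • K.cor i + ((1 - lam) * β) • K.cor i = 0 := by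
          rw [← add_smul, hcoef, zero_smul]
        rw [e1, e2, smul_sub, smul_sub, smul_smul, smul_smul, sub_add_sub_comm, hz, sub_zero]
      have hidfull : lam • y₁ + (1 - lam) • y₂ = lam • x₁ + (1 - lam) • x₂ := by
        have hy1' : y₁ = K.ρ w₁ (K.ρ (K.cs.simple i) h) := by
          rw [hy₁, map_mul]; rfl
        have hy2' : y₂ = K.ρ w₁ (K.ρ (K.cs.simple i * w) h) := by
          rw [hy₂, map_mul]; rfl
        have hmap := congrArg (K.ρ w₁) hidsmall
        rw [map_add, map_add, LinearMap.map_smul, LinearMap.map_smul, LinearMap.map_smul,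
          LinearMap.map_smul, hrw2] at hmap
        rw [hy1', hy2', hx₁]
        exact hmap
      set z := lam • x₁ + (1 - lam) • x₂ with hz
      have hzseg : z ∈ segment ℝ x₁ x₂ := ⟨lam, 1 - lam, hlam0.le, by linarith, by ring, rfl⟩
      have hzopen : z ∈ openSegment ℝ y₁ y₂ :=
        ⟨lam, 1 - lam, hlam0, by linarith, by ring, hidfull⟩
      have hy₁P : y₁ ∈ convexHull ℝ (K.orb h) :=
        subset_convexHull ℝ _ ⟨w₁ * K.cs.simple i, rfl⟩
      have hy₂P : y₂ ∈ convexHull ℝ (K.orb h) :=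
        subset_convexHull ℝ _ ⟨w₁ * (K.cs.simple i * w), rfl⟩
      have hy₁F := hext hy₁P hy₂P hzseg hzopen
      obtain ⟨p, q, hp, hq, hpq, hy⟩ := hy₁F
      have e : p • h + q • K.ρ w h = K.ρ (K.cs.simple i) h := by
        have hcg := congrArg (K.ρ w₁⁻¹) hy
        rw [map_add, LinearMap.map_smul, LinearMap.map_smul] at hcg
        have a1 : K.ρ w₁⁻¹ x₁ = h := by
          rw [hx₁, ← Module.End.mul_apply, ← map_mul, inv_mul_cancel, map_one,
            Module.End.one_apply]
        have a2 : K.ρ w₁⁻¹ x₂ = K.ρ w h := by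
          rw [hx₂, ← Module.End.mul_apply, ← map_mul, ← hwdef]
        have a3 : K.ρ w₁⁻¹ y₁ = K.ρ (K.cs.simple i) h := by
          rw [hy₁, ← Module.End.mul_apply, ← map_mul, inv_mul_cancel_left]
        rw [a1, a2, a3] at hcg
        exact hcg
      have e2 : q • (h - K.ρ w h) = Ai • K.cor i := by
        have e1 : K.ρ (K.cs.simple i) h = h - Ai • K.cor i := by rw [K.refl i h, hAi]
        rw [e1] at e
        have hmod : q • (h - K.ρ w h) = (p + q) • h - (p • h + q • K.ρ w h) := by module
        rw [hmod, e, hpq, one_smul, sub_sub_cancel]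
      have hq0 : q = 0 := by
        have hcg := congrArg (f j) e2
        rw [LinearMap.map_smul, LinearMap.map_smul, smul_eq_mul, smul_eq_mul, hf j i,
          if_neg (Ne.symm hij), mul_zero] at hcg
        have hpos := KMAux.supp_pos K h hC hf (i::j::r).length (i::j::r) le_rfl hred j
          (by simp)
        rw [← hvl] at hpos
        rcases mul_eq_zero.mp hcg with h0 | h0
        · exact h0
        · exact absurd h0 hpos.ne'
      rw [hq0, zero_smul] at e2
      have hcor0 : K.cor i = 0 := by
        rcases smul_eq_zero.mp e2.symm with h0 | h0
        · exact absurd h0 hAipos.ne'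
        · exact h0
      have hpii := K.pairing i i
      rw [hcor0, map_zero, K.diag i] at hpii
      norm_num at hpii
  · rintro ⟨i, rfl⟩
    set x₁ := K.ρ w₁ h with hx₁
    set x₂ := K.ρ (w₁ * K.cs.simple i) h with hx₂
    set P := convexHull ℝ (K.orb h) with hP
    set g : V →ₗ[ℝ] ℝ := ∑ t ∈ Finset.univ.erase i, (f t).comp (K.ρ w₁⁻¹) with hg
    set c0 := ∑ t ∈ Finset.univ.erase i, f t h with hc0
    have hg_apply : ∀ v : V, g v = ∑ t ∈ Finset.univ.erase i, f t (K.ρ w₁⁻¹ v) := by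
      intro v; rw [hg]; simp [LinearMap.sum_apply]
    have hgu : ∀ u : W, g (K.ρ u h) = ∑ t ∈ Finset.univ.erase i, f t (K.ρ (w₁⁻¹ * u) h) := by
      intro u
      rw [hg_apply]
      refine Finset.sum_congr rfl fun t _ => ?_
      rw [← Module.End.mul_apply, ← map_mul]
    have horb_le : ∀ u : W, g (K.ρ u h) ≤ c0 := by
      intro u
      rw [hgu, hc0]
      refine Finset.sum_le_sum fun t _ => ?_
      obtain ⟨d, hd, hdval⟩ := KMAux.dpos K h hC (w₁⁻¹ * u)
      have h1 : f t (h - K.ρ (w₁⁻¹ * u) h) = d t := by rw [hdval, KMAux.feval K hf]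
      rw [map_sub] at h1
      linarith [hd t]
    have hP_le : ∀ p ∈ P, g p ≤ c0 := by
      intro p hp
      have hsub : K.orb h ⊆ {v | g v ≤ c0} := by
        rintro _ ⟨u, rfl⟩
        exact horb_le u
      have hcvx : Convex ℝ {v | g v ≤ c0} := convex_halfSpace_le (LinearMap.isLinear g) c0
      exact convexHull_min hsub hcvx hp
    have hgx₁ : g x₁ = c0 := by
      rw [hx₁, hgu, hc0]
      refine Finset.sum_congr rfl fun t _ => ?_
      rw [inv_mul_cancel, map_one, Module.End.one_apply]
    have hgx₂ : g x₂ = c0 := by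
      rw [hx₂, hgu, hc0]
      refine Finset.sum_congr rfl fun t ht => ?_
      rw [inv_mul_cancel_left, K.refl i h, map_sub, LinearMap.map_smul, hf t i,
        if_neg (Finset.ne_of_mem_erase ht), smul_zero, sub_zero]
    have horb_eq : ∀ u : W, g (K.ρ u h) = c0 → K.ρ u h = x₁ ∨ K.ρ u h = x₂ := by
      intro u hu
      set v := w₁⁻¹ * u with hv
      have hnn : ∀ t ∈ Finset.univ.erase i, 0 ≤ f t (h - K.ρ v h) := by
        intro s _
        obtain ⟨d, hd, hdval⟩ := KMAux.dpos K h hC v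
        rw [hdval, KMAux.feval K hf]
        exact hd s
      have hsum : ∑ t ∈ Finset.univ.erase i, f t (h - K.ρ v h) = 0 := by
        rw [hgu] at hu
        calc ∑ t ∈ Finset.univ.erase i, f t (h - K.ρ v h)
            = ∑ t ∈ Finset.univ.erase i, (f t h - f t (K.ρ v h)) :=
              Finset.sum_congr rfl fun t _ => map_sub _ _ _
          _ = 0 := by rw [Finset.sum_sub_distrib, ← hc0, hu, sub_self]
      have hzero := (Finset.sum_eq_zero_iff_of_nonneg hnn).mp hsum
      have hchar := KMAux.charEdge K h hC hf (v := v) (i := i)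
        (fun t hti => hzero t (by simp [hti]))
      have hu' : K.ρ u h = K.ρ w₁ (K.ρ v h) := by
        rw [← Module.End.mul_apply, ← map_mul, hv, mul_inv_cancel_left]
      rcases hchar with h1 | h1
      · left; rw [hu', h1, map_one, Module.End.one_apply, hx₁]
      · right; rw [hu', h1, hx₂, map_mul]; rfl
    have hseg_eq : ∀ zz ∈ segment ℝ x₁ x₂, g zz = c0 := by
      rintro zz ⟨p, q, hp, hq, hpq, rfl⟩
      rw [map_add, LinearMap.map_smul, LinearMap.map_smul, hgx₁, hgx₂, smul_eq_mul,
        smul_eq_mul]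
      linear_combination c0 * hpq
    have hBclaim : ∀ p ∈ P, g p = c0 → p ∈ segment ℝ x₁ x₂ := by
      intro p hp hgp
      rw [hP, convexHull_eq] at hp
      obtain ⟨ι, tt, wgt, zf, hw0, hw1, hzs, hcm⟩ := hp
      have hzle : ∀ r ∈ tt, g (zf r) ≤ c0 := by
        intro r hr
        obtain ⟨u, hu⟩ := hzs r hr
        rw [← hu]
        exact horb_le u
      have hpsum : p = ∑ r ∈ tt, wgt r • zf r := by
        rw [← hcm, Finset.centerMass_eq_of_sum_1 _ _ hw1]
      have hgp' : ∑ r ∈ tt, wgt r * g (zf r) = c0 := by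
        rw [← hgp, hpsum, map_sum]
        exact Finset.sum_congr rfl fun r _ => by rw [LinearMap.map_smul, smul_eq_mul]
      have hterm : ∀ r ∈ tt, wgt r * (c0 - g (zf r)) = 0 := by
        apply (Finset.sum_eq_zero_iff_of_nonneg ?_).mp
        · have hexp : ∑ r ∈ tt, wgt r * (c0 - g (zf r))
              = (∑ r ∈ tt, wgt r) * c0 - ∑ r ∈ tt, wgt r * g (zf r) := by
            rw [Finset.sum_mul, ← Finset.sum_sub_distrib]
            exact Finset.sum_congr rfl fun r _ => by ring
          rw [hexp, hw1, one_mul, hgp', sub_self]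
        · intro r hr; exact mul_nonneg (hw0 r hr) (by linarith [hzle r hr])
      have hmem : p ∈ convexHull ℝ ({x₁, x₂} : Set V) := by
        rw [← hcm, ← Finset.centerMass_filter_ne_zero]
        apply Finset.centerMass_mem_convexHull
        · intro r hr; exact hw0 r (Finset.mem_of_mem_filter r hr)
        · rw [Finset.sum_filter_ne_zero, hw1]; norm_num
        · intro r hr
          rw [Finset.mem_filter] at hr
          obtain ⟨hrt, hrw⟩ := hr
          have hgz : g (zf r) = c0 := by
            have hterm' := hterm r hrt
            rcases mul_eq_zero.mp hterm' with h0 | h0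
            · exact absurd h0 hrw
            · linarith
          obtain ⟨u, hu⟩ := hzs r hrt
          rw [← hu] at hgz ⊢
          rcases horb_eq u hgz with h1 | h1 <;> simp [h1]
      rwa [convexHull_pair] at hmem
    refine ⟨⟨x₁, left_mem_segment ℝ x₁ x₂⟩, convex_segment x₁ x₂, ?_, ?_⟩
    · exact (convex_convexHull ℝ _).segment_subset (subset_convexHull ℝ _ ⟨w₁, rfl⟩)
        (subset_convexHull ℝ _ ⟨w₁ * K.cs.simple i, rfl⟩)
    · intro xa hxa xb hxb zz hzz hzo
      obtain ⟨pa, pb, hpa, hpb, hab, hzzeq⟩ := hzo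
      have hgz : g zz = c0 := hseg_eq zz hzz
      have hgz' : pa * g xa + pb * g xb = c0 := by
        rw [← hgz, ← hzzeq, map_add, LinearMap.map_smul, LinearMap.map_smul, smul_eq_mul,
          smul_eq_mul]
      have hga := hP_le xa hxa
      have hgb := hP_le xb hxb
      have h3 : pa * c0 + pb * c0 = c0 := by rw [← add_mul, hab, one_mul]
      have hgae : g xa = c0 := by
        by_contra hne'
        have hlt : g xa < c0 := lt_of_le_of_ne hga hne'
        have h1 : pa * g xa < pa * c0 := (mul_lt_mul_iff_right₀ hpa).mpr hlt
        have h2 : pb * g xb ≤ pb * c0 := (mul_le_mul_iff_right₀ hpb).mpr hgb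
        linarith
      have hgbe : g xb = c0 := by
        by_contra hne'
        have hlt : g xb < c0 := lt_of_le_of_ne hgb hne'
        have h1 : pb * g xb < pb * c0 := (mul_lt_mul_iff_right₀ hpb).mpr hlt
        have h2 : pa * g xa ≤ pa * c0 := (mul_le_mul_iff_right₀ hpa).mpr hga
        linarith
      exact hBclaim xa hxa hgae
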